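/- Let ρ_x, ρ_y ∈ (−1,1), δ > 0, and define the 2×2 matrix J = (1/√(1 + 2δ(ρ_xρ_y + √(1−ρ_y²)√(1−ρ_x²)) + δ²)) · [[1 + δ√(1−ρ_y²)/√(1−ρ_x²), δ(ρ_y − ρ_x√(1−ρ_y²)/√(1−ρ_x²))], [ρ_y − ρ_x√(1−ρ_y²)/√(1−ρ_x²), δ + √(1−ρ_y²)/√(1−ρ_x²)]]. Then J Σ_x Jᵀ = Σ_y, where Σ_x = [[1, ρ_x],[ρ_x, 1]] and Σ_y = [[1, ρ_y],[ρ_y, 1]]. -/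

import Mathlib

open Real

set_option maxHeartbeats 2000000 in
/-- The assignment matrix `J` of the quadratic-Gaussian matching model satisfies
`J Σ_x Jᵀ = Σ_y`. -/
theorem stmt_13 (ρx ρy : ℝ) (hρx : ρx ∈ Set.Ioo (-1 : ℝ) 1) (hρy : ρy ∈ Set.Ioo (-1 : ℝ) 1)
    (δ : ℝ) (hδ : 0 < δ)
    (J : Matrix (Fin 2) (Fin 2) ℝ)
    (hJ : J = (1 / Real.sqrt (1 + 2 * δ * (ρx * ρy + Real.sqrt (1 - ρy ^ 2) * Real.sqrt (1 - ρx ^ 2)) + δ ^ 2)) •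
      !![1 + δ * Real.sqrt (1 - ρy ^ 2) / Real.sqrt (1 - ρx ^ 2),
         δ * (ρy - ρx * Real.sqrt (1 - ρy ^ 2) / Real.sqrt (1 - ρx ^ 2));
         ρy - ρx * Real.sqrt (1 - ρy ^ 2) / Real.sqrt (1 - ρx ^ 2),
         δ + Real.sqrt (1 - ρy ^ 2) / Real.sqrt (1 - ρx ^ 2)]) :
    J * !![(1 : ℝ), ρx; ρx, 1] * J.transpose = !![(1 : ℝ), ρy; ρy, 1] := by
  obtain ⟨hx1, hx2⟩ := hρx
  obtain ⟨hy1, hy2⟩ := hρy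
  set a := Real.sqrt (1 - ρx ^ 2) with hadef
  set b := Real.sqrt (1 - ρy ^ 2) with hbdef
  have hxpos : (0:ℝ) < 1 - ρx ^ 2 := by nlinarith
  have hypos : (0:ℝ) < 1 - ρy ^ 2 := by nlinarith
  have ha : a ^ 2 = 1 - ρx ^ 2 := Real.sq_sqrt hxpos.le
  have hb : b ^ 2 = 1 - ρy ^ 2 := Real.sq_sqrt hypos.le
  have hapos : 0 < a := Real.sqrt_pos.mpr hxpos
  have hbpos : 0 < b := Real.sqrt_pos.mpr hypos
  have hNpos : 0 < 1 + 2 * δ * (ρx * ρy + b * a) + δ ^ 2 := by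
    have hab : 0 < b * a := mul_pos hbpos hapos
    nlinarith [sq_nonneg (1 - δ), mul_pos hδ hab,
      mul_pos hδ (by nlinarith : (0:ℝ) < 1 + ρx * ρy)]
  set s := Real.sqrt (1 + 2 * δ * (ρx * ρy + b * a) + δ ^ 2) with hsdef
  have hs : s ^ 2 = 1 + 2 * δ * (ρx * ρy + b * a) + δ ^ 2 := Real.sq_sqrt hNpos.le
  have hspos : 0 < s := Real.sqrt_pos.mpr hNpos
  have hane : a ≠ 0 := hapos.ne'
  have hsne : s ≠ 0 := hspos.ne'
  subst hJ
  ext i j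
  fin_cases i <;> fin_cases j <;>
    simp only [Matrix.mul_apply, Fin.sum_univ_two, Matrix.smul_apply, Matrix.transpose_apply,
      Matrix.cons_val', Matrix.cons_val_zero, Matrix.cons_val_one, Matrix.head_cons,
      Matrix.empty_val', Matrix.cons_val_fin_one, Matrix.head_fin_const, smul_eq_mul, Matrix.of_apply, Fin.zero_eta, Fin.mk_one] <;>
    field_simp
  · linear_combination (-a^2)*hs + (-δ^2+ρy^2*δ^2-2*a*b*δ)*ha + (δ^2-ρx^2*δ^2)*hb
  · linear_combination (-a^2*ρy)*hs + (ρx*δ-ρx*ρy^2*δ-2*a*b*ρy*δ)*ha + (-ρx*δ+ρx^3*δ)*hb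
  · linear_combination (-a^2*ρy)*hs + (ρx*δ-ρx*ρy^2*δ-2*a*b*ρy*δ)*ha + (-ρx*δ+ρx^3*δ)*hb
  · linear_combination (-a^2)*hs + (-1+ρy^2-2*a*b*δ)*ha + (1-ρx^2)*hb
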